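/- Let C ≥ 2, let a₁,…,a_C be points of a type α, let d : α → α → ℝ be symmetric and nonnegative, and let λ₁,…,λ_C be positive reals. Then min_{k} max_{j ≠ k} λ_j·d(a_k, a_j) ≤ 2·max_{k ≠ j} (λ_k·λ_j/(λ_k + λ_j))·d(a_k, a_j). -/
import Mathlib


/-- Key step of the min-Pick-Perm analysis: for points `a₁,…,a_C` (`C ≥ 2`), a
symmetric nonnegative `d`, and positive weights,
`min_k max_{j ≠ k} λ_j·d(a_k, a_j)` is at most twice the maximum over ordered
pairs of distinct indices of `(λ_k·λ_j/(λ_k+λ_j))·d(a_k, a_j)`. -/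
theorem min_pick_key_step {α : Type*} {C : ℕ} (hC : 2 ≤ C)
    (a : Fin C → α) (d : α → α → ℝ)
    (hd_symm : ∀ x y, d x y = d y x)
    (hd_nonneg : ∀ x y, 0 ≤ d x y)
    (lam : Fin C → ℝ) (hlam : ∀ k, 0 < lam k) :
    Finset.univ.inf' ⟨⟨0, by omega⟩, Finset.mem_univ _⟩
      (fun k => (Finset.univ.erase k).sup'
        (by
          rw [← Finset.card_pos, Finset.card_erase_of_mem (Finset.mem_univ _),
            Finset.card_univ, Fintype.card_fin]
          omega)
        (fun j => lam j * d (a k) (a j))) ≤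
    2 * ((Finset.univ ×ˢ Finset.univ).filter
        (fun p : Fin C × Fin C => p.1 ≠ p.2)).sup'
      ⟨(⟨0, by omega⟩, ⟨1, by omega⟩), by
        simp [Finset.mem_filter, Fin.ext_iff]⟩
      (fun p => (lam p.1 * lam p.2 / (lam p.1 + lam p.2)) * d (a p.1) (a p.2)) := by
  -- choose k maximizing lam
  obtain ⟨k, -, hk⟩ := Finset.exists_max_image (Finset.univ : Finset (Fin C)) lam
    ⟨⟨0, by omega⟩, Finset.mem_univ _⟩
  refine le_trans (Finset.inf'_le _ (Finset.mem_univ k)) ?_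
  rw [Finset.sup'_le_iff]
  intro j hj
  have hjk : j ≠ k := (Finset.mem_erase.mp hj).1
  have hmem : (k, j) ∈ (Finset.univ ×ˢ Finset.univ).filter
      (fun p : Fin C × Fin C => p.1 ≠ p.2) := by
    simp [Ne.symm hjk]
  have hsup := Finset.le_sup' (f := fun p : Fin C × Fin C =>
    (lam p.1 * lam p.2 / (lam p.1 + lam p.2)) * d (a p.1) (a p.2)) hmem
  have hk' := hk j (Finset.mem_univ j)
  have hkp := hlam k
  have hjp := hlam j
  have hsum : 0 < lam k + lam j := by linarith
  have key : lam j ≤ 2 * (lam k * lam j / (lam k + lam j)) := by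
    rw [mul_div_assoc', le_div_iff₀ hsum]
    nlinarith
  have step : lam j * d (a k) (a j) ≤
      2 * (lam k * lam j / (lam k + lam j) * d (a k) (a j)) := by
    have := mul_le_mul_of_nonneg_right key (hd_nonneg (a k) (a j))
    linarith
  simp only at hsup
  linarith
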